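/- Unitary averaging of a minimal GKSL generator (Lindblad's trick): let ℒ = L(Ψ,G,H) on M_n(ℂ), where G, H are Hermitian, tr(H) = 0, Ψ(X) = Σ_k A_k X A_kᴴ with tr(A_k) = 0 for every k, and 2G − Ψ*(I) is positive semidefinite. Let μ be the Haar probability measure on the unitary group U(n). Then ∫_{U(n)} ℒ(U) U⁻¹ dμ(U) = −G − (tr(G)/n)·I − iH; consequently, with ‖ℒ‖ := sup{‖ℒ(X)‖ : ‖X‖ ≤ 1} (operator norms on M_n(ℂ)), one has ‖G‖ ≤ ‖ℒ‖, ‖H‖ ≤ ‖ℒ‖, and ‖Ψ‖ ≤ 5‖ℒ‖. -/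

import Mathlib

set_option maxHeartbeats 1600000
set_option linter.unusedSectionVars false


open scoped Kronecker ComplexOrder Matrix

/-- The Choi matrix of a linear map `Λ : M_n(ℂ) → M_m(ℂ)`:
`C(Λ) = ∑ i j, Λ(E i j) ⊗ₖ E i j`, a matrix indexed by `Fin m × Fin n`. -/
noncomputable def choi {n m : ℕ}
    (Λ : Matrix (Fin n) (Fin n) ℂ →ₗ[ℂ] Matrix (Fin m) (Fin m) ℂ) :
    Matrix (Fin m × Fin n) (Fin m × Fin n) ℂ :=
  ∑ i : Fin n, ∑ j : Fin n,
    (Λ (Matrix.single i j 1)) ⊗ₖ (Matrix.single i j 1)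

/-- `Λ ⊗ id_N` : the unique linear map with `(Λ ⊗ id_N)(A ⊗ₖ B) = Λ(A) ⊗ₖ B`,
written out explicitly. -/
noncomputable def tensorId {n m : ℕ}
    (Λ : Matrix (Fin n) (Fin n) ℂ →ₗ[ℂ] Matrix (Fin m) (Fin m) ℂ) (N : ℕ)
    (M : Matrix (Fin n × Fin N) (Fin n × Fin N) ℂ) :
    Matrix (Fin m × Fin N) (Fin m × Fin N) ℂ :=
  Matrix.of fun p q => Λ (Matrix.of fun i j => M (i, p.2) (j, q.2)) p.1 q.1

/-- `Λ` is `N`-positive: `Λ ⊗ id_N` maps PSD matrices to PSD matrices. -/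
def NPos {n m : ℕ}
    (Λ : Matrix (Fin n) (Fin n) ℂ →ₗ[ℂ] Matrix (Fin m) (Fin m) ℂ) (N : ℕ) : Prop :=
  ∀ M : Matrix (Fin n × Fin N) (Fin n × Fin N) ℂ,
    M.PosSemidef → (tensorId Λ N M).PosSemidef

/-- `Λ` is completely positive: `N`-positive for every `N ≥ 1`. -/
def CP {n m : ℕ}
    (Λ : Matrix (Fin n) (Fin n) ℂ →ₗ[ℂ] Matrix (Fin m) (Fin m) ℂ) : Prop :=
  ∀ N : ℕ, 1 ≤ N → NPos Λ N

open scoped Matrix.Norms.L2Operator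

namespace LindbladTrick

open MeasureTheory Matrix

noncomputable def entryCLM {n : ℕ} (i j : Fin n) : Matrix (Fin n) (Fin n) ℂ →L[ℂ] ℂ :=
  LinearMap.toContinuousLinearMap
    { toFun := fun X => X i j, map_add' := fun _ _ => rfl, map_smul' := fun _ _ => rfl }

@[simp] lemma entryCLM_apply {n : ℕ} (i j : Fin n) (X : Matrix (Fin n) (Fin n) ℂ) :
    entryCLM i j X = X i j := rfl

noncomputable def conjCLM {n : ℕ} (V W : Matrix (Fin n) (Fin n) ℂ) :
    Matrix (Fin n) (Fin n) ℂ →L[ℂ] Matrix (Fin n) (Fin n) ℂ :=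
  LinearMap.toContinuousLinearMap
    { toFun := fun X => V * X * W,
      map_add' := by intros; simp [mul_add, add_mul]
      map_smul' := by intros; simp [mul_smul_comm, smul_mul_assoc] }

@[simp] lemma conjCLM_apply {n : ℕ} (V W X : Matrix (Fin n) (Fin n) ℂ) :
    conjCLM V W X = V * X * W := rfl

noncomputable def lmulCLM {n : ℕ} (V : Matrix (Fin n) (Fin n) ℂ) :
    Matrix (Fin n) (Fin n) ℂ →L[ℂ] Matrix (Fin n) (Fin n) ℂ :=
  LinearMap.toContinuousLinearMap
    { toFun := fun X => V * X,
      map_add' := by intros; simp [mul_add]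
      map_smul' := by intros; simp [mul_smul_comm] }

@[simp] lemma lmulCLM_apply {n : ℕ} (V X : Matrix (Fin n) (Fin n) ℂ) :
    lmulCLM V X = V * X := rfl

lemma euclidean_inner_eq {n : ℕ} (v w : EuclideanSpace ℂ (Fin n)) :
    (inner ℂ v w : ℂ) = star (WithLp.equiv 2 (Fin n → ℂ) v) ⬝ᵥ (WithLp.equiv 2 (Fin n → ℂ) w) := by
  simp [PiLp.inner_apply, RCLike.inner_apply, dotProduct, Pi.star_apply, mul_comm]

/-- Loewner monotonicity of the `L²` operator norm on PSD matrices. -/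
lemma psd_norm_le {n : ℕ} {A B : Matrix (Fin n) (Fin n) ℂ}
    (hA : A.PosSemidef) (hBA : (B - A).PosSemidef) : ‖A‖ ≤ ‖B‖ := by
  classical
  open scoped MatrixOrder in obtain ⟨S, hS⟩ := CStarAlgebra.nonneg_iff_eq_star_mul_self.mp hA.nonneg
  obtain rfl : A = Sᴴ * S := hS
  have hq : ∀ x : Fin n → ℂ, star x ⬝ᵥ (Sᴴ * S) *ᵥ x ≤ star x ⬝ᵥ B *ᵥ x := by
    intro x
    have h := hBA.dotProduct_mulVec_nonneg x
    rw [Matrix.sub_mulVec, dotProduct_sub] at h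
    exact sub_nonneg.mp h
  have key : ∀ x : EuclideanSpace ℂ (Fin n),
      ‖(WithLp.equiv 2 (Fin n → ℂ)).symm (S *ᵥ (WithLp.equiv 2 (Fin n → ℂ) x))‖ ^ 2
        ≤ ‖B‖ * ‖x‖ ^ 2 := by
    intro x
    set y : Fin n → ℂ := WithLp.equiv 2 (Fin n → ℂ) x with hy
    have e1 : (‖(WithLp.equiv 2 (Fin n → ℂ)).symm (S *ᵥ y)‖ : ℝ) ^ 2
        = (star (S *ᵥ y) ⬝ᵥ (S *ᵥ y)).re := by
      rw [← inner_self_eq_norm_sq (𝕜 := ℂ)]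
      rw [euclidean_inner_eq]
      simp
    have e2 : star (S *ᵥ y) ⬝ᵥ (S *ᵥ y) = star y ⬝ᵥ (Sᴴ * S) *ᵥ y := by
      rw [Matrix.star_mulVec, ← Matrix.dotProduct_mulVec, Matrix.mulVec_mulVec]
    have e3 : (star y ⬝ᵥ (Sᴴ * S) *ᵥ y).re ≤ (star y ⬝ᵥ B *ᵥ y).re :=
      (Complex.le_def.mp (hq y)).1
    have e4 : (star y ⬝ᵥ B *ᵥ y).re ≤ ‖B‖ * ‖x‖ ^ 2 := by
      have h5 : star y ⬝ᵥ B *ᵥ y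
          = (inner ℂ x ((WithLp.equiv 2 (Fin n → ℂ)).symm (B *ᵥ y)) : ℂ) := by
        rw [euclidean_inner_eq]
        simp [hy]
      have h6 : (star y ⬝ᵥ B *ᵥ y).re
          ≤ ‖(inner ℂ x ((WithLp.equiv 2 (Fin n → ℂ)).symm (B *ᵥ y)) : ℂ)‖ := by
        rw [h5]; exact Complex.re_le_norm _
      have h7 : ‖(inner ℂ x ((WithLp.equiv 2 (Fin n → ℂ)).symm (B *ᵥ y)) : ℂ)‖
          ≤ ‖x‖ * ‖(WithLp.equiv 2 (Fin n → ℂ)).symm (B *ᵥ y)‖ := norm_inner_le_norm _ _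
      have h8 : ‖(WithLp.equiv 2 (Fin n → ℂ)).symm (B *ᵥ y)‖ ≤ ‖B‖ * ‖x‖ := by
        have := Matrix.l2_opNorm_mulVec B x
        exact this
      calc (star y ⬝ᵥ B *ᵥ y).re ≤ _ := h6
        _ ≤ ‖x‖ * ‖(WithLp.equiv 2 (Fin n → ℂ)).symm (B *ᵥ y)‖ := h7
        _ ≤ ‖x‖ * (‖B‖ * ‖x‖) := mul_le_mul_of_nonneg_left h8 (norm_nonneg _)
        _ = ‖B‖ * ‖x‖ ^ 2 := by ring
    rw [e1, e2]
    exact le_trans e3 e4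
  have hSnorm : ‖S‖ ≤ Real.sqrt ‖B‖ := by
    rw [Matrix.l2_opNorm_def]
    refine ContinuousLinearMap.opNorm_le_bound _ (Real.sqrt_nonneg _) (fun x => ?_)
    have hTx : ((Matrix.toEuclideanLin (𝕜 := ℂ) (m := Fin n) (n := Fin n)).trans
        LinearMap.toContinuousLinearMap S) x
        = (WithLp.equiv 2 (Fin n → ℂ)).symm (S *ᵥ (WithLp.equiv 2 (Fin n → ℂ) x)) := rfl
    rw [hTx]
    calc ‖(WithLp.equiv 2 (Fin n → ℂ)).symm (S *ᵥ (WithLp.equiv 2 (Fin n → ℂ) x))‖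
        = Real.sqrt
            (‖(WithLp.equiv 2 (Fin n → ℂ)).symm (S *ᵥ (WithLp.equiv 2 (Fin n → ℂ) x))‖ ^ 2) :=
          (Real.sqrt_sq (norm_nonneg _)).symm
      _ ≤ Real.sqrt (‖B‖ * ‖x‖ ^ 2) := Real.sqrt_le_sqrt (key x)
      _ = Real.sqrt ‖B‖ * ‖x‖ := by
          rw [Real.sqrt_mul (norm_nonneg B), Real.sqrt_sq (norm_nonneg x)]
  calc ‖Sᴴ * S‖ = ‖S‖ * ‖S‖ := Matrix.l2_opNorm_conjTranspose_mul_self S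
    _ ≤ Real.sqrt ‖B‖ * Real.sqrt ‖B‖ :=
        mul_le_mul hSnorm hSnorm (norm_nonneg _) (Real.sqrt_nonneg _)
    _ = ‖B‖ := Real.mul_self_sqrt (norm_nonneg _)

/-- Matrices are determined by traces against all test matrices. -/
lemma eq_of_trace_mul_eq {n : ℕ} {C D : Matrix (Fin n) (Fin n) ℂ}
    (h : ∀ ρ : Matrix (Fin n) (Fin n) ℂ, (C * ρ).trace = (D * ρ).trace) : C = D := by
  ext i j
  have h' := h (Matrix.single j i 1)
  simp only [Matrix.trace, Matrix.diag, Matrix.mul_apply, Matrix.single,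
    Matrix.of_apply, mul_ite, mul_one, mul_zero, ite_and] at h'
  simpa [Finset.sum_ite_eq, Finset.sum_ite_eq'] using h'

section Integrals
variable {n : ℕ} [MeasurableSpace (Matrix.unitaryGroup (Fin n) ℂ)]
    [BorelSpace (Matrix.unitaryGroup (Fin n) ℂ)]
    (μ : MeasureTheory.Measure (Matrix.unitaryGroup (Fin n) ℂ))
    [μ.IsHaarMeasure] [MeasureTheory.IsProbabilityMeasure μ]

local notation "Mx" => Matrix (Fin n) (Fin n) ℂ
local notation "Γ" => Matrix.unitaryGroup (Fin n) ℂ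

lemma norm_conj_le (U : Γ) (X : Mx) :
    ‖(U : Mx) * X * star (U : Mx)‖ ≤ ‖X‖ * ‖(1 : Mx)‖ := by
  have h1 : ‖(U : Mx)‖ * ‖(U : Mx)‖ = ‖(1 : Mx)‖ := by
    rw [← Matrix.l2_opNorm_conjTranspose_mul_self, ← Matrix.star_eq_conjTranspose,
      Matrix.UnitaryGroup.star_mul_self]
  have h2 : ‖star (U : Mx)‖ = ‖(U : Mx)‖ := by
    rw [Matrix.star_eq_conjTranspose, Matrix.l2_opNorm_conjTranspose]
  calc ‖(U : Mx) * X * star (U : Mx)‖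
      ≤ ‖(U : Mx) * X‖ * ‖star (U : Mx)‖ := Matrix.l2_opNorm_mul _ _
    _ ≤ (‖(U : Mx)‖ * ‖X‖) * ‖star (U : Mx)‖ :=
        mul_le_mul_of_nonneg_right (Matrix.l2_opNorm_mul _ _) (norm_nonneg _)
    _ = ‖X‖ * ‖(1 : Mx)‖ := by rw [h2, ← h1]; ring

lemma continuous_conj (X : Mx) :
    Continuous (fun U : Γ => (U : Mx) * X * star (U : Mx)) := by
  have h : Continuous (fun U : Γ => (U : Mx)) := continuous_subtype_val
  exact (h.mul continuous_const).mul h.star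

lemma integrable_conj (X : Mx) :
    Integrable (fun U : Γ => (U : Mx) * X * star (U : Mx)) μ :=
  (MeasureTheory.integrable_const (‖X‖ * ‖(1 : Mx)‖)).mono'
    (continuous_conj X).aestronglyMeasurable
    (Filter.Eventually.of_forall fun U => norm_conj_le U X)

/-- Schur averaging: `∫ U X U⁻¹ dμ = (tr X / n) • 1`. -/
lemma schur_average (X : Mx) :
    (∫ U : Γ, (U : Mx) * X * star (U : Mx) ∂μ) = (X.trace / (n : ℂ)) • 1 := by
  set D : Mx := ∫ U : Γ, (U : Mx) * X * star (U : Mx) ∂μ with hD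
  have hcomm : ∀ V : Γ, (V : Mx) * D = D * (V : Mx) := by
    intro V
    have hVV : star (V : Mx) * (V : Mx) = 1 := Matrix.UnitaryGroup.star_mul_self V
    have hconj : (V : Mx) * D * star (V : Mx) = D := by
      rw [show (V : Mx) * D * star (V : Mx) = conjCLM (V : Mx) (star (V : Mx)) D from rfl,
        hD, ← (conjCLM (V : Mx) (star (V : Mx))).integral_comp_comm (integrable_conj μ X)]
      have : ∀ U : Γ,
          conjCLM (V : Mx) (star (V : Mx)) ((U : Mx) * X * star (U : Mx))
            = ((V * U : Γ) : Mx) * X * star ((V * U : Γ) : Mx) := by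
        intro U
        simp only [conjCLM_apply, Submonoid.coe_mul, StarMul.star_mul, mul_assoc]
      simp_rw [this]
      exact MeasureTheory.integral_mul_left_eq_self
        (fun U : Γ => (U : Mx) * X * star (U : Mx)) V
    calc (V : Mx) * D = (V : Mx) * D * (star (V : Mx) * (V : Mx)) := by rw [hVV, mul_one]
      _ = ((V : Mx) * D * star (V : Mx)) * (V : Mx) := by simp only [mul_assoc]
      _ = D * (V : Mx) := by rw [hconj]
  have hoff : ∀ i j : Fin n, i ≠ j → D i j = 0 := by
    intro i j hij
    set d : Fin n → ℂ := fun a => if a = i then -1 else 1 with hd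
    have hmem : Matrix.diagonal d ∈ Matrix.unitaryGroup (Fin n) ℂ := by
      rw [Matrix.mem_unitaryGroup_iff']
      rw [Matrix.star_eq_conjTranspose, Matrix.diagonal_conjTranspose,
        Matrix.diagonal_mul_diagonal]
      ext a b
      rcases eq_or_ne a b with rfl | hab
      · rcases eq_or_ne a i with rfl | hai
        · simp [Matrix.diagonal_apply_eq, hd, Pi.star_apply, apply_ite (star : ℂ → ℂ)]
        · simp [Matrix.diagonal_apply_eq, hd, hai, Pi.star_apply, apply_ite (star : ℂ → ℂ)]
      · simp [Matrix.diagonal_apply_ne _ hab, Matrix.one_apply_ne hab]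
    have h := congrFun (congrFun (hcomm ⟨Matrix.diagonal d, hmem⟩) i) j
    simp only [Matrix.diagonal_mul, Matrix.mul_diagonal] at h
    have hdi : d i = -1 := by simp [hd]
    have hdj : d j = 1 := by simp [hd, hij.symm]
    rw [hdi, hdj, mul_one] at h
    have : (2 : ℂ) * D i j = 0 := by linear_combination - h
    simpa using this
  have hdiag : ∀ k l : Fin n, D k k = D l l := by
    intro k l
    set σ : Equiv.Perm (Fin n) := Equiv.swap k l with hσ
    set P : Mx := Matrix.of (fun i j => if σ i = j then (1 : ℂ) else 0) with hP
    have hPD : ∀ i j, (P * D) i j = D (σ i) j := by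
      intro i j
      simp only [Matrix.mul_apply, hP, Matrix.of_apply, ite_mul, one_mul, zero_mul]
      rw [Finset.sum_ite_eq (Finset.univ) (σ i) (fun a => D a j)]
      simp
    have hDP : ∀ i j, (D * P) i j = D i (σ j) := by
      intro i j
      simp only [Matrix.mul_apply, hP, Matrix.of_apply, mul_ite, mul_one, mul_zero]
      have hiff : ∀ a, (σ a = j) ↔ (a = σ j) := by
        intro a
        constructor
        · intro h; subst h; simp [hσ]
        · intro h; subst h; simp [hσ]
      simp_rw [hiff]
      rw [Finset.sum_ite_eq' (Finset.univ) (σ j) (fun a => D i a)]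
      simp
    have hmem : P ∈ Matrix.unitaryGroup (Fin n) ℂ := by
      rw [Matrix.mem_unitaryGroup_iff']
      ext i j
      simp only [Matrix.mul_apply, Matrix.star_apply, hP, Matrix.of_apply,
        apply_ite (star : ℂ → ℂ), star_one, star_zero, ite_mul, one_mul, zero_mul,
        Matrix.one_apply]
      have hiff : ∀ a, (σ a = i) ↔ (a = σ i) := by
        intro a
        constructor
        · intro h; subst h; simp [hσ]
        · intro h; subst h; simp [hσ]
      simp_rw [hiff]
      rw [Finset.sum_ite_eq' (Finset.univ) (σ i) (fun a => if σ a = j then (1:ℂ) else 0)]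
      have hσσ : σ (σ i) = i := Equiv.swap_apply_self k l i
      simp only [Finset.mem_univ, if_true, hσσ]
    have h := congrFun (congrFun (hcomm ⟨P, hmem⟩) k) l
    have h1 := hPD k l
    have h2 := hDP k l
    have hσk : σ k = l := Equiv.swap_apply_left k l
    have hσl : σ l = k := Equiv.swap_apply_right k l
    rw [h] at h1
    rw [h2, hσl] at h1
    rw [hσk] at h1
    exact h1
  have htr : D.trace = X.trace := by
    have hCLM : D.trace = (LinearMap.toContinuousLinearMap
        (Matrix.traceLinearMap (Fin n) ℂ ℂ)) D := rfl
    rw [hCLM, hD, ← (LinearMap.toContinuousLinearMap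
        (Matrix.traceLinearMap (Fin n) ℂ ℂ)).integral_comp_comm (integrable_conj μ X)]
    have : ∀ U : Γ, (LinearMap.toContinuousLinearMap (Matrix.traceLinearMap (Fin n) ℂ ℂ))
        ((U : Mx) * X * star (U : Mx)) = X.trace := by
      intro U
      have : ((U : Mx) * X * star (U : Mx)).trace = X.trace := by
        rw [Matrix.trace_mul_cycle, Matrix.UnitaryGroup.star_mul_self, Matrix.one_mul]
      exact this
    simp_rw [this]
    simp
  ext i j
  rcases eq_or_ne i j with rfl | hij
  · have hsum : D.trace = (n : ℂ) * D i i := by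
      have h0 : D.trace = ∑ _k : Fin n, D i i :=
        Finset.sum_congr rfl (fun k _ => hdiag k i)
      rw [h0, Finset.sum_const, Finset.card_univ, Fintype.card_fin, nsmul_eq_mul]
    have hn : (n : ℂ) ≠ 0 := by
      have : 0 < n := Fin.pos i
      exact_mod_cast Nat.cast_ne_zero.mpr this.ne'
    have : D i i = X.trace / (n : ℂ) := by
      field_simp
      rw [← htr, hsum]; ring
    simpa [Matrix.smul_apply, Matrix.one_apply] using this
  · simp [Matrix.smul_apply, Matrix.one_apply, hij, hoff i j hij]

end Integrals

end LindbladTrick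

/-- Lindblad's trick: unitary averaging of a minimal GKSL generator.
`M_n(ℂ)` carries the `L²` operator norm, so that the norms `‖ℒ‖`, `‖Ψ‖` of continuous
linear maps below are exactly `sup {‖ℒ X‖ : ‖X‖ ≤ 1}` for matrix operator norms. -/
theorem lindblad_unitary_averaging {n : ℕ}
    [MeasurableSpace (Matrix.unitaryGroup (Fin n) ℂ)]
    [BorelSpace (Matrix.unitaryGroup (Fin n) ℂ)]
    (μ : MeasureTheory.Measure (Matrix.unitaryGroup (Fin n) ℂ))
    [μ.IsHaarMeasure] [MeasureTheory.IsProbabilityMeasure μ]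
    (Ψ : Matrix (Fin n) (Fin n) ℂ →L[ℂ] Matrix (Fin n) (Fin n) ℂ)
    (G H : Matrix (Fin n) (Fin n) ℂ) (hG : G.IsHermitian) (hH : H.IsHermitian)
    (hH0 : H.trace = 0)
    (ι : Type) [Fintype ι] (A : ι → Matrix (Fin n) (Fin n) ℂ)
    (hKraus : ∀ X : Matrix (Fin n) (Fin n) ℂ, Ψ X = ∑ k : ι, A k * X * (A k)ᴴ)
    (hA0 : ∀ k : ι, (A k).trace = 0)
    (Ψadj : Matrix (Fin n) (Fin n) ℂ →ₗ[ℂ] Matrix (Fin n) (Fin n) ℂ)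
    (hadj : ∀ B ρ : Matrix (Fin n) (Fin n) ℂ,
      (Bᴴ * Ψ ρ).trace = ((Ψadj B)ᴴ * ρ).trace)
    (hTNI : ((2 : ℂ) • G - Ψadj 1).PosSemidef)
    (ℒ : Matrix (Fin n) (Fin n) ℂ →L[ℂ] Matrix (Fin n) (Fin n) ℂ)
    (hℒ : ∀ ρ : Matrix (Fin n) (Fin n) ℂ,
      ℒ ρ = Ψ ρ - (G * ρ + ρ * G) - Complex.I • (H * ρ - ρ * H)) :
    (∀ i j : Fin n,
      (∫ U : Matrix.unitaryGroup (Fin n) ℂ,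
          (ℒ (U : Matrix (Fin n) (Fin n) ℂ) *
            ((U⁻¹ : Matrix.unitaryGroup (Fin n) ℂ) : Matrix (Fin n) (Fin n) ℂ)) i j ∂μ)
        = (-G - (G.trace / (n : ℂ)) • (1 : Matrix (Fin n) (Fin n) ℂ)
            - Complex.I • H) i j) ∧
    ‖G‖ ≤ ‖ℒ‖ ∧ ‖H‖ ≤ ‖ℒ‖ ∧ ‖Ψ‖ ≤ 5 * ‖ℒ‖ := by
  classical
  open LindbladTrick MeasureTheory Matrix in
  rcases Nat.eq_zero_or_pos n with rfl | hn
  · -- trivial case n = 0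
    have hG0 : G = 0 := by ext i _; exact i.elim0
    have hH0' : H = 0 := by ext i _; exact i.elim0
    refine ⟨fun i _ => i.elim0, ?_, ?_, ?_⟩
    · have h0 : ‖G‖ = 0 := by rw [hG0]; exact norm_zero
      rw [h0]; exact ContinuousLinearMap.opNorm_nonneg ℒ
    · have h0 : ‖H‖ = 0 := by rw [hH0']; exact norm_zero
      rw [h0]; exact ContinuousLinearMap.opNorm_nonneg ℒ
    · have h5 : (0:ℝ) ≤ 5 * ‖ℒ‖ :=
        mul_nonneg (by norm_num) (ContinuousLinearMap.opNorm_nonneg ℒ)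
      refine ContinuousLinearMap.opNorm_le_bound _ h5 (fun X => ?_)
      have hX : Ψ X = 0 := by ext i _; exact i.elim0
      rw [hX, norm_zero]
      exact mul_nonneg h5 (norm_nonneg X)
  · haveI : Nonempty (Fin n) := ⟨⟨0, hn⟩⟩
    haveI : Nontrivial (Matrix (Fin n) (Fin n) ℂ) := by
      refine ⟨1, 0, fun h => ?_⟩
      have := congrFun (congrFun h ⟨0, hn⟩) ⟨0, hn⟩
      simp [Matrix.one_apply] at this
    have hone : ‖(1 : Matrix (Fin n) (Fin n) ℂ)‖ = 1 := CStarRing.norm_one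
    have hUnorm : ∀ U : Matrix.unitaryGroup (Fin n) ℂ,
        ‖(U : Matrix (Fin n) (Fin n) ℂ)‖ = 1 := fun U => CStarRing.norm_coe_unitary U
    have hcoe : Continuous (fun U : Matrix.unitaryGroup (Fin n) ℂ =>
        (U : Matrix (Fin n) (Fin n) ℂ)) := continuous_subtype_val
    have hfc : Continuous (fun U : Matrix.unitaryGroup (Fin n) ℂ =>
        ℒ (U : Matrix (Fin n) (Fin n) ℂ) * star (U : Matrix (Fin n) (Fin n) ℂ)) :=
      (ℒ.continuous.comp hcoe).mul hcoe.star
    have hfb : ∀ U : Matrix.unitaryGroup (Fin n) ℂ,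
        ‖ℒ (U : Matrix (Fin n) (Fin n) ℂ) * star (U : Matrix (Fin n) (Fin n) ℂ)‖ ≤ ‖ℒ‖ := by
      intro U
      have h1 : ‖ℒ (U : Matrix (Fin n) (Fin n) ℂ)‖ ≤ ‖ℒ‖ := by
        have := ℒ.le_opNorm (U : Matrix (Fin n) (Fin n) ℂ)
        rwa [hUnorm U, mul_one] at this
      have h2 : ‖star (U : Matrix (Fin n) (Fin n) ℂ)‖ = 1 := by
        rw [Matrix.star_eq_conjTranspose, Matrix.l2_opNorm_conjTranspose, hUnorm U]
      calc ‖ℒ (U : Matrix (Fin n) (Fin n) ℂ) * star (U : Matrix (Fin n) (Fin n) ℂ)‖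
          ≤ ‖ℒ (U : Matrix (Fin n) (Fin n) ℂ)‖ * ‖star (U : Matrix (Fin n) (Fin n) ℂ)‖ :=
            Matrix.l2_opNorm_mul _ _
        _ = ‖ℒ (U : Matrix (Fin n) (Fin n) ℂ)‖ := by rw [h2, mul_one]
        _ ≤ ‖ℒ‖ := h1
    have hfi : Integrable (fun U : Matrix.unitaryGroup (Fin n) ℂ =>
        ℒ (U : Matrix (Fin n) (Fin n) ℂ) * star (U : Matrix (Fin n) (Fin n) ℂ)) μ :=
      (integrable_const ‖ℒ‖).mono' hfc.aestronglyMeasurable (Filter.Eventually.of_forall hfb)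
    -- expansion of the integrand
    have hexp : ∀ U : Matrix.unitaryGroup (Fin n) ℂ,
        ℒ (U : Matrix (Fin n) (Fin n) ℂ) * star (U : Matrix (Fin n) (Fin n) ℂ)
          = (∑ k : ι, A k * ((U : Matrix (Fin n) (Fin n) ℂ)
                * ((A k)ᴴ * star (U : Matrix (Fin n) (Fin n) ℂ))))
            - (U : Matrix (Fin n) (Fin n) ℂ) * (G * star (U : Matrix (Fin n) (Fin n) ℂ))
            + Complex.I • ((U : Matrix (Fin n) (Fin n) ℂ)
                * (H * star (U : Matrix (Fin n) (Fin n) ℂ)))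
            - (G + Complex.I • H) := by
      intro U
      have hU1 : (U : Matrix (Fin n) (Fin n) ℂ) * star (U : Matrix (Fin n) (Fin n) ℂ) = 1 :=
        Matrix.mem_unitaryGroup_iff.mp U.prop
      rw [hℒ, hKraus]
      simp only [sub_mul, add_mul, Finset.sum_mul, smul_mul_assoc, smul_sub, mul_assoc,
        hU1, mul_one]
      abel
    -- integrability of pieces
    have hTi : ∀ X : Matrix (Fin n) (Fin n) ℂ,
        Integrable (fun U : Matrix.unitaryGroup (Fin n) ℂ =>
          (U : Matrix (Fin n) (Fin n) ℂ) * X * star (U : Matrix (Fin n) (Fin n) ℂ)) μ :=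
      fun X => integrable_conj μ X
    have hI1 : Integrable (fun U : Matrix.unitaryGroup (Fin n) ℂ =>
        ∑ k : ι, A k * ((U : Matrix (Fin n) (Fin n) ℂ)
          * ((A k)ᴴ * star (U : Matrix (Fin n) (Fin n) ℂ)))) μ := by
      refine integrable_finset_sum _ (fun k _ => ?_)
      exact ((lmulCLM (A k)).integrable_comp (hTi ((A k)ᴴ))).congr
        (Filter.Eventually.of_forall (fun U => by simp [mul_assoc]))
    have hI2 : Integrable (fun U : Matrix.unitaryGroup (Fin n) ℂ =>
        (U : Matrix (Fin n) (Fin n) ℂ) * (G * star (U : Matrix (Fin n) (Fin n) ℂ))) μ :=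
      (hTi G).congr (Filter.Eventually.of_forall (fun U => by simp [mul_assoc]))
    have hI3 : Integrable (fun U : Matrix.unitaryGroup (Fin n) ℂ =>
        Complex.I • ((U : Matrix (Fin n) (Fin n) ℂ)
          * (H * star (U : Matrix (Fin n) (Fin n) ℂ)))) μ :=
      ((hTi H).smul Complex.I).congr
        (Filter.Eventually.of_forall (fun U => by simp [mul_assoc]))
    -- values of pieces
    have hval1 : (∫ U : Matrix.unitaryGroup (Fin n) ℂ,
        ∑ k : ι, A k * ((U : Matrix (Fin n) (Fin n) ℂ)
          * ((A k)ᴴ * star (U : Matrix (Fin n) (Fin n) ℂ))) ∂μ) = 0 := by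
      rw [integral_finset_sum _ (fun k _ =>
        ((lmulCLM (A k)).integrable_comp (hTi ((A k)ᴴ))).congr
          (Filter.Eventually.of_forall (fun U => by simp [mul_assoc])))]
      refine Finset.sum_eq_zero (fun k _ => ?_)
      have hcomp : (fun U : Matrix.unitaryGroup (Fin n) ℂ =>
          A k * ((U : Matrix (Fin n) (Fin n) ℂ)
            * ((A k)ᴴ * star (U : Matrix (Fin n) (Fin n) ℂ))))
          = fun U : Matrix.unitaryGroup (Fin n) ℂ =>
            lmulCLM (A k) ((U : Matrix (Fin n) (Fin n) ℂ) * (A k)ᴴ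
              * star (U : Matrix (Fin n) (Fin n) ℂ)) := by
        funext U; simp [mul_assoc]
      rw [hcomp, (lmulCLM (A k)).integral_comp_comm (hTi ((A k)ᴴ)), schur_average μ]
      simp [Matrix.trace_conjTranspose, hA0 k]
    have hval2 : (∫ U : Matrix.unitaryGroup (Fin n) ℂ,
        (U : Matrix (Fin n) (Fin n) ℂ) * (G * star (U : Matrix (Fin n) (Fin n) ℂ)) ∂μ)
          = (G.trace / (n : ℂ)) • 1 := by
      have hcomp : (fun U : Matrix.unitaryGroup (Fin n) ℂ =>
          (U : Matrix (Fin n) (Fin n) ℂ) * (G * star (U : Matrix (Fin n) (Fin n) ℂ)))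
          = fun U : Matrix.unitaryGroup (Fin n) ℂ =>
            (U : Matrix (Fin n) (Fin n) ℂ) * G * star (U : Matrix (Fin n) (Fin n) ℂ) := by
        funext U; rw [mul_assoc]
      rw [hcomp, schur_average μ]
    have hval3 : (∫ U : Matrix.unitaryGroup (Fin n) ℂ,
        Complex.I • ((U : Matrix (Fin n) (Fin n) ℂ)
          * (H * star (U : Matrix (Fin n) (Fin n) ℂ))) ∂μ) = 0 := by
      rw [integral_smul]
      have hcomp : (fun U : Matrix.unitaryGroup (Fin n) ℂ =>
          (U : Matrix (Fin n) (Fin n) ℂ) * (H * star (U : Matrix (Fin n) (Fin n) ℂ)))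
          = fun U : Matrix.unitaryGroup (Fin n) ℂ =>
            (U : Matrix (Fin n) (Fin n) ℂ) * H * star (U : Matrix (Fin n) (Fin n) ℂ) := by
        funext U; rw [mul_assoc]
      rw [hcomp, schur_average μ, hH0]
      simp
    -- the main Bochner integral
    have hK : (∫ U : Matrix.unitaryGroup (Fin n) ℂ,
        ℒ (U : Matrix (Fin n) (Fin n) ℂ) * star (U : Matrix (Fin n) (Fin n) ℂ) ∂μ)
          = -G - (G.trace / (n : ℂ)) • 1 - Complex.I • H := by
      have hI12 : Integrable (fun U : Matrix.unitaryGroup (Fin n) ℂ =>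
          (∑ k : ι, A k * ((U : Matrix (Fin n) (Fin n) ℂ)
              * ((A k)ᴴ * star (U : Matrix (Fin n) (Fin n) ℂ))))
            - (U : Matrix (Fin n) (Fin n) ℂ) * (G * star (U : Matrix (Fin n) (Fin n) ℂ))) μ :=
        (hI1.sub hI2).congr (Filter.Eventually.of_forall (fun _ => rfl))
      have hI123 : Integrable (fun U : Matrix.unitaryGroup (Fin n) ℂ =>
          (∑ k : ι, A k * ((U : Matrix (Fin n) (Fin n) ℂ)
              * ((A k)ᴴ * star (U : Matrix (Fin n) (Fin n) ℂ))))
            - (U : Matrix (Fin n) (Fin n) ℂ) * (G * star (U : Matrix (Fin n) (Fin n) ℂ))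
            + Complex.I • ((U : Matrix (Fin n) (Fin n) ℂ)
                * (H * star (U : Matrix (Fin n) (Fin n) ℂ)))) μ :=
        (hI12.add hI3).congr (Filter.Eventually.of_forall (fun _ => rfl))
      rw [integral_congr_ae (Filter.Eventually.of_forall hexp)]
      rw [integral_sub hI123 (integrable_const _), integral_add hI12 hI3,
        integral_sub hI1 hI2, integral_const]
      rw [hval1, hval2, hval3]
      simp only [probReal_univ, one_smul]
      abel
    -- norm of the average
    have hKn : ‖-G - (G.trace / (n : ℂ)) • (1 : Matrix (Fin n) (Fin n) ℂ) - Complex.I • H‖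
        ≤ ‖ℒ‖ := by
      rw [← hK]
      have := norm_integral_le_of_norm_le_const (μ := μ) (Filter.Eventually.of_forall hfb)
      simpa [measure_univ] using this
    -- Ψ-adjoint of 1
    have hS : Ψadj 1 = ∑ k : ι, (A k)ᴴ * A k := by
      have h1 : (Ψadj 1)ᴴ = ∑ k : ι, (A k)ᴴ * A k := by
        apply eq_of_trace_mul_eq
        intro ρ
        have h2 := (hadj 1 ρ).symm
        rw [Matrix.conjTranspose_one, Matrix.one_mul] at h2
        rw [h2, hKraus, Matrix.trace_sum, Finset.sum_mul, Matrix.trace_sum]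
        exact Finset.sum_congr rfl (fun k _ => Matrix.trace_mul_cycle (A k) ρ ((A k)ᴴ))
      calc Ψadj 1 = ((Ψadj 1)ᴴ)ᴴ := (Matrix.conjTranspose_conjTranspose _).symm
        _ = (∑ k : ι, (A k)ᴴ * A k)ᴴ := by rw [h1]
        _ = ∑ k : ι, (A k)ᴴ * A k := by
            simp [Matrix.conjTranspose_sum, Matrix.conjTranspose_mul]
    have hSpsd : (∑ k : ι, (A k)ᴴ * A k).PosSemidef := by
      refine Finset.sum_induction (fun k => (A k)ᴴ * A k)
        (fun M : Matrix (Fin n) (Fin n) ℂ => M.PosSemidef)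
        (fun a b ha hb => ha.add hb) Matrix.PosSemidef.zero
        (fun k _ => Matrix.posSemidef_conjTranspose_mul_self (A k))
    have hGpsd : G.PosSemidef := by
      refine Matrix.posSemidef_iff_dotProduct_mulVec.mpr ⟨hG, fun x => ?_⟩
      have h1 := hTNI.dotProduct_mulVec_nonneg x
      rw [hS, Matrix.sub_mulVec, dotProduct_sub, Matrix.smul_mulVec,
        dotProduct_smul] at h1
      have h2 := hSpsd.dotProduct_mulVec_nonneg x
      have h3 : (0 : ℂ) ≤ (2 : ℂ) • (star x ⬝ᵥ G *ᵥ x) := le_trans h2 (sub_nonneg.mp h1)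
      rw [smul_eq_mul] at h3
      rw [Complex.le_def] at h3 ⊢
      obtain ⟨hre, him⟩ := h3
      simp only [Complex.mul_re, Complex.mul_im, Complex.zero_re, Complex.zero_im,
        Complex.re_ofNat, Complex.im_ofNat] at hre him ⊢
      constructor
      · linarith
      · linarith
    -- trace of G is a nonnegative real
    have htr0 : (0 : ℂ) ≤ G.trace := by
      have hdiagG : ∀ i : Fin n, (0 : ℂ) ≤ G i i := by
        intro i
        have := hGpsd.dotProduct_mulVec_nonneg (Pi.single i 1)
        simpa [dotProduct, Matrix.mulVec, Pi.single_apply, Pi.star_apply,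
          apply_ite (star : ℂ → ℂ), Finset.sum_ite_eq, Finset.sum_ite_eq',
          dotProduct] using this
      exact Finset.sum_nonneg (fun i _ => hdiagG i)
    obtain ⟨t, ht0, htG⟩ : ∃ t : ℝ, 0 ≤ t ∧ G.trace = (t : ℂ) := by
      rw [Complex.le_def] at htr0
      exact ⟨G.trace.re, by simpa using htr0.1,
        (Complex.ext (by simp) (by simpa using htr0.2)).symm⟩
    have hc : (G.trace / (n : ℂ)) = ((t / n : ℝ) : ℂ) := by
      rw [htG]; push_cast; ring
    have htn0 : (0 : ℝ) ≤ t / n := div_nonneg ht0 (Nat.cast_nonneg n)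
    -- c • 1 is PSD
    have hc1 : (((t / n : ℝ) : ℂ) • (1 : Matrix (Fin n) (Fin n) ℂ)).PosSemidef := by
      refine Matrix.posSemidef_iff_dotProduct_mulVec.mpr ⟨?_, ?_⟩
      · show _ = _
        simp [Matrix.conjTranspose_smul, Complex.conj_ofReal]
      · intro x
        rw [Matrix.smul_mulVec, dotProduct_smul, Matrix.one_mulVec, smul_eq_mul]
        have h0 : (0 : ℂ) ≤ star x ⬝ᵥ x := by
          have := (Matrix.PosSemidef.one (n := Fin n) (R := ℂ)).dotProduct_mulVec_nonneg x
          simpa [Matrix.one_mulVec] using this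
        have hcast : (0 : ℂ) ≤ ((t / n : ℝ) : ℂ) := by exact_mod_cast htn0
        exact mul_nonneg hcast h0
    have hmono : ‖G‖ ≤ ‖G + ((t / n : ℝ) : ℂ) • (1 : Matrix (Fin n) (Fin n) ℂ)‖ := by
      refine psd_norm_le hGpsd ?_
      have : G + ((t / n : ℝ) : ℂ) • (1 : Matrix (Fin n) (Fin n) ℂ) - G
          = ((t / n : ℝ) : ℂ) • (1 : Matrix (Fin n) (Fin n) ℂ) := by abel
      rw [this]
      exact hc1
    -- decompose K
    set K : Matrix (Fin n) (Fin n) ℂ :=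
      -G - (G.trace / (n : ℂ)) • 1 - Complex.I • H with hKdef
    have hKH : Kᴴ = -G - (G.trace / (n : ℂ)) • (1 : Matrix (Fin n) (Fin n) ℂ)
        + Complex.I • H := by
      rw [hKdef, hc]
      simp only [Matrix.conjTranspose_sub, Matrix.conjTranspose_neg, Matrix.conjTranspose_smul,
        Matrix.conjTranspose_one, hG.eq, hH.eq, RCLike.star_def, Complex.conj_I,
        Complex.conj_ofReal, neg_smul]
      abel
    have hKplus : K + Kᴴ = (-2 : ℂ) • (G + (G.trace / (n : ℂ)) • 1) := by
      rw [hKH, hKdef]; module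
    have hKminus : K - Kᴴ = (-2 * Complex.I) • H := by
      rw [hKH, hKdef]; module
    have hKnorm : ‖K‖ ≤ ‖ℒ‖ := hKn
    have hKHnorm : ‖Kᴴ‖ = ‖K‖ := Matrix.l2_opNorm_conjTranspose K
    have hGsum : ‖G + (G.trace / (n : ℂ)) • (1 : Matrix (Fin n) (Fin n) ℂ)‖ ≤ ‖K‖ := by
      have h1 : ‖K + Kᴴ‖ ≤ 2 * ‖K‖ := by
        calc ‖K + Kᴴ‖ ≤ ‖K‖ + ‖Kᴴ‖ := norm_add_le _ _
          _ = 2 * ‖K‖ := by rw [hKHnorm]; ring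
      have h2 : ‖K + Kᴴ‖ = 2 * ‖G + (G.trace / (n : ℂ)) • (1 : Matrix (Fin n) (Fin n) ℂ)‖ := by
        rw [hKplus, norm_smul]
        norm_num
      linarith
    have hHnorm : ‖H‖ ≤ ‖K‖ := by
      have h1 : ‖K - Kᴴ‖ ≤ 2 * ‖K‖ := by
        calc ‖K - Kᴴ‖ ≤ ‖K‖ + ‖Kᴴ‖ := norm_sub_le _ _
          _ = 2 * ‖K‖ := by rw [hKHnorm]; ring
      have h2 : ‖K - Kᴴ‖ = 2 * ‖H‖ := by
        have hnI : ‖(-2 * Complex.I : ℂ)‖ = 2 := by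
          rw [norm_mul, Complex.norm_I, mul_one]
          norm_num
        rw [hKminus, norm_smul, hnI]
      linarith
    have hGbound : ‖G‖ ≤ ‖ℒ‖ := by
      have := hmono
      rw [← hc] at this
      exact le_trans (le_trans this hGsum) hKnorm
    have hHbound : ‖H‖ ≤ ‖ℒ‖ := le_trans hHnorm hKnorm
    refine ⟨?_, hGbound, hHbound, ?_⟩
    · intro i j
      have hfun : (fun U : Matrix.unitaryGroup (Fin n) ℂ =>
          (ℒ (U : Matrix (Fin n) (Fin n) ℂ) *
            ((U⁻¹ : Matrix.unitaryGroup (Fin n) ℂ) : Matrix (Fin n) (Fin n) ℂ)) i j)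
          = fun U : Matrix.unitaryGroup (Fin n) ℂ =>
            entryCLM i j (ℒ (U : Matrix (Fin n) (Fin n) ℂ)
              * star (U : Matrix (Fin n) (Fin n) ℂ)) := rfl
      rw [hfun, (entryCLM i j).integral_comp_comm hfi, hK]
      rfl
    · have h5 : (0 : ℝ) ≤ 5 * ‖ℒ‖ :=
        mul_nonneg (by norm_num) (ContinuousLinearMap.opNorm_nonneg ℒ)
      refine ContinuousLinearMap.opNorm_le_bound _ h5 (fun X => ?_)
      have hX : Ψ X = ℒ X + (G * X + X * G) + Complex.I • (H * X - X * H) := by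
        rw [hℒ X]; abel
      have b1 : ‖ℒ X‖ ≤ ‖ℒ‖ * ‖X‖ := ℒ.le_opNorm X
      have b2 : ‖G * X‖ ≤ ‖ℒ‖ * ‖X‖ :=
        le_trans (Matrix.l2_opNorm_mul G X)
          (mul_le_mul_of_nonneg_right hGbound (norm_nonneg X))
      have b3 : ‖X * G‖ ≤ ‖ℒ‖ * ‖X‖ := by
        refine le_trans (Matrix.l2_opNorm_mul X G) ?_
        calc ‖X‖ * ‖G‖ ≤ ‖X‖ * ‖ℒ‖ := mul_le_mul_of_nonneg_left hGbound (norm_nonneg X)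
          _ = ‖ℒ‖ * ‖X‖ := mul_comm _ _
      have b4 : ‖H * X‖ ≤ ‖ℒ‖ * ‖X‖ :=
        le_trans (Matrix.l2_opNorm_mul H X)
          (mul_le_mul_of_nonneg_right hHbound (norm_nonneg X))
      have b5 : ‖X * H‖ ≤ ‖ℒ‖ * ‖X‖ := by
        refine le_trans (Matrix.l2_opNorm_mul X H) ?_
        calc ‖X‖ * ‖H‖ ≤ ‖X‖ * ‖ℒ‖ := mul_le_mul_of_nonneg_left hHbound (norm_nonneg X)
          _ = ‖ℒ‖ * ‖X‖ := mul_comm _ _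
      have bI : ‖Complex.I • (H * X - X * H)‖ ≤ 2 * (‖ℒ‖ * ‖X‖) := by
        rw [norm_smul, Complex.norm_I, one_mul]
        calc ‖H * X - X * H‖ ≤ ‖H * X‖ + ‖X * H‖ := norm_sub_le _ _
          _ ≤ ‖ℒ‖ * ‖X‖ + ‖ℒ‖ * ‖X‖ := add_le_add b4 b5
          _ = 2 * (‖ℒ‖ * ‖X‖) := by ring
      calc ‖Ψ X‖ = ‖ℒ X + (G * X + X * G) + Complex.I • (H * X - X * H)‖ := by rw [hX]
        _ ≤ ‖ℒ X + (G * X + X * G)‖ + ‖Complex.I • (H * X - X * H)‖ := norm_add_le _ _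
        _ ≤ (‖ℒ X‖ + ‖G * X + X * G‖) + ‖Complex.I • (H * X - X * H)‖ := by
            exact add_le_add_left (norm_add_le _ _) _
        _ ≤ (‖ℒ X‖ + (‖G * X‖ + ‖X * G‖)) + ‖Complex.I • (H * X - X * H)‖ := by
            exact add_le_add_left (add_le_add_right (norm_add_le _ _) _) _
        _ ≤ (‖ℒ‖ * ‖X‖ + (‖ℒ‖ * ‖X‖ + ‖ℒ‖ * ‖X‖)) + 2 * (‖ℒ‖ * ‖X‖) := by
            exact add_le_add (add_le_add b1 (add_le_add b2 b3)) bI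
        _ = 5 * ‖ℒ‖ * ‖X‖ := by ring
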